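/- Let L and L' be real normed spaces and let Q : L → L' be a continuous map satisfying Q(u+v) + Q(u-v) = 2Q(u) + 2Q(v) for all u, v ∈ L and Q(k•u) = k²•Q(u) for all u ∈ L and all k ∈ ℝ. Define B : L × L → L' by B(u,v) = (1/4)•(Q(u+v) − Q(u−v)). Then B is homogeneous in its first argument over the reals, i.e., B(k•u, v) = k•B(u,v) for all u, v ∈ L and all k ∈ ℝ. -/
import Mathlib


/-- The polarization of a continuous quadratic operator is
homogeneous over the reals in its first argument. -/
theorem polarization_real_homogeneous_first_argument
    {L L' : Type*} [NormedAddCommGroup L] [NormedSpace ℝ L]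
    [NormedAddCommGroup L'] [NormedSpace ℝ L']
    (Q : L → L') (hQcont : Continuous Q)
    (hQpar : ∀ u v : L, Q (u + v) + Q (u - v) = (2 : ℝ) • Q u + (2 : ℝ) • Q v)
    (hQhom : ∀ (k : ℝ) (u : L), Q (k • u) = k ^ 2 • Q u)
    (B : L → L → L')
    (hB : ∀ u v : L, B u v = (1 / 4 : ℝ) • (Q (u + v) - Q (u - v))) :
    ∀ (k : ℝ) (u v : L), B (k • u) v = k • B u v := by
  -- Q is even
  have hQneg : ∀ u : L, Q (-u) = Q u := by
    intro u
    have := hQhom (-1) u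
    simpa using this
  -- additivity of B in the first argument
  have hadd : ∀ x y v : L, B (x + y) v = B x v + B y v := by
    intro x y v
    have e1 : Q (x + y + v) + Q (x - y + v) = (2:ℝ) • Q (x + v) + (2:ℝ) • Q y := by
      rw [show x + y + v = (x + v) + y by abel, show x - y + v = (x + v) - y by abel]
      exact hQpar (x + v) y
    have e2 : Q (x + y - v) + Q (x - y - v) = (2:ℝ) • Q (x - v) + (2:ℝ) • Q y := by
      rw [show x + y - v = (x - v) + y by abel, show x - y - v = (x - v) - y by abel]
      exact hQpar (x - v) y
    have e3 : Q (x + y + v) + Q (x - y - v) = (2:ℝ) • Q (y + v) + (2:ℝ) • Q x := by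
      have h := hQpar (y + v) x
      rw [show y + v + x = x + y + v by abel, show y + v - x = -(x - y - v) by abel,
        hQneg] at h
      exact h
    have e4 : Q (x + y - v) + Q (x - y + v) = (2:ℝ) • Q (y - v) + (2:ℝ) • Q x := by
      have h := hQpar (y - v) x
      rw [show y - v + x = x + y - v by abel, show y - v - x = -(x - y + v) by abel,
        hQneg] at h
      exact h
    rw [hB, hB, hB]
    linear_combination (norm := module) (1/8 : ℝ) • e1 - (1/8 : ℝ) • e2 +
      (1/8 : ℝ) • e3 - (1/8 : ℝ) • e4
  intro k u v
  -- the map k ↦ B (k • u) v is additive and continuous, hence real-linear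
  let f : ℝ →+ L' := AddMonoidHom.mk' (fun k => B (k • u) v) (by
    intro a b
    simp only [add_smul]
    exact hadd _ _ _)
  have hfc : Continuous f := by
    have heq : (fun k : ℝ => B (k • u) v) =
        fun k : ℝ => (1 / 4 : ℝ) • (Q (k • u + v) - Q (k • u - v)) := by
      funext k; exact hB _ _
    show Continuous fun k : ℝ => B (k • u) v
    rw [heq]
    fun_prop
  have h := map_real_smul f hfc k 1
  have h2 : f 1 = B u v := by simp [f]
  rw [h2] at h
  simpa [f] using h
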